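/- Let A ⊆ B be rings and let v be an A-valuation on B with kernel p and valuation ring R_v ⊆ k(p). Then v is unbounded if and only if the canonical ring homomorphism B ⊗_A R_v → k(p), sending b ⊗ r to the product of the residue class of b with r, is surjective. -/

import Mathlib

/-- A valuation `v` on `B` is *unbounded* (with respect to the subgroup of the value
group generated by its nonzero values, which is the value group in the paper's
convention) if no element of that subgroup strictly bounds all values of `v`. -/
def ValUnbounded {B : Type*} [CommRing B] {Γ : Type*} [LinearOrderedCommGroupWithZero Γ]
    (v : Valuation B Γ) : Prop :=
  ∀ γ ∈ Subgroup.closure {g : Γˣ | (g : Γ) ∈ Set.range v}, ∃ b : B, (γ : Γ) ≤ v b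

/-- let `v` be an `A`-valuation on `B` with kernel `p` and valuation ring
`R_v ⊆ k(p)`.  Here `k(p)` is modelled by a field `K` together with a homomorphism
`φ : B → K` such that every element of `K` is a fraction `φ c / φ d` (`hres`), and the
induced valuation `v̄` on `K` is `vb`, so that `v = vb ∘ φ` and `R_v = vb.integer`.
Then `v` is unbounded iff the canonical map `B ⊗_A R_v → k(p)`, `b ⊗ r ↦ φ b * r`, is
surjective, i.e. iff every element of `K` is a finite sum `∑ φ (c i) * r i` with
`r i ∈ R_v`. -/
theorem stmt1 {B K : Type*} [CommRing B] [Field K] {Γ : Type*}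
    [LinearOrderedCommGroupWithZero Γ]
    (A : Subring B) (φ : B →+* K) (vb : Valuation K Γ)
    (hres : ∀ x : K, ∃ c d : B, φ d ≠ 0 ∧ x * φ d = φ c)
    (hA : ∀ a ∈ A, vb (φ a) ≤ 1) :
    ValUnbounded (vb.comap φ) ↔
      ∀ x : K, ∃ (m : ℕ) (c : Fin m → B) (r : Fin m → K),
        (∀ i, r i ∈ vb.integer) ∧ x = ∑ i, φ (c i) * r i := by
  set v : Valuation B Γ := vb.comap φ with hv
  have hvb : ∀ b : B, v b = vb (φ b) := fun b => rfl
  constructor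
  · intro hub x
    by_cases hx : x = 0
    · exact ⟨0, ![], ![], fun i => i.elim0, by simp [hx]⟩
    · -- x ≠ 0, write x = φ c / φ d
      obtain ⟨c, d, hd, hcd⟩ := hres x
      have hφc : φ c ≠ 0 := by
        rw [← hcd]; exact mul_ne_zero hx hd
      have hvc : vb (φ c) ≠ 0 := by simpa [Valuation.zero_iff] using hφc
      have hvd : vb (φ d) ≠ 0 := by simpa [Valuation.zero_iff] using hd
      have hvx : vb x ≠ 0 := by simpa [Valuation.zero_iff] using hx
      -- the unit (vb x) lies in the closure
      set S : Set Γˣ := {g : Γˣ | (g : Γ) ∈ Set.range v}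
      have hmemc : Units.mk0 _ hvc ∈ Subgroup.closure S :=
        Subgroup.subset_closure ⟨c, rfl⟩
      have hmemd : Units.mk0 _ hvd ∈ Subgroup.closure S :=
        Subgroup.subset_closure ⟨d, rfl⟩
      have hux : Units.mk0 _ hvx ∈ Subgroup.closure S := by
        have : Units.mk0 _ hvx = Units.mk0 _ hvc * (Units.mk0 _ hvd)⁻¹ := by
          ext
          have : vb x * vb (φ d) = vb (φ c) := by
            rw [← Valuation.map_mul, hcd]
          simp only [Units.val_mul, Units.val_inv_eq_inv_val, Units.val_mk0]
          rw [eq_mul_inv_iff_mul_eq₀ hvd]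
          exact this
        rw [this]
        exact mul_mem hmemc (inv_mem hmemd)
      obtain ⟨b, hb⟩ := hub _ hux
      have hb' : vb x ≤ vb (φ b) := hb
      have hφb : φ b ≠ 0 := by
        intro h
        rw [h, map_zero] at hb'
        exact hvx (le_antisymm hb' zero_le')
      refine ⟨1, ![b], ![x / φ b], ?_, ?_⟩
      · intro i
        fin_cases i
        show vb (x / φ b) ≤ 1
        rw [map_div₀]
        exact div_le_one_of_le₀ hb' zero_le'
      · simp [mul_div_cancel₀ x hφb, mul_comm]
  · intro hsurj
    -- auxiliary: for any c with v c ≠ 0, the inverse value is bounded by some v b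
    have key : ∀ c : B, v c ≠ 0 → ∃ b : B, (v c)⁻¹ ≤ v b := by
      intro c hc
      have hφc : φ c ≠ 0 := by
        intro h; apply hc; rw [hvb, h, map_zero]
      obtain ⟨m, cs, r, hr, hx⟩ := hsurj (φ c)⁻¹
      by_contra hcon
      push_neg at hcon
      have hlt : vb ((φ c)⁻¹) < (v c)⁻¹ := by
        rw [hx]
        refine Valuation.map_sum_lt vb (inv_ne_zero hc) fun i _ => ?_
        calc vb (φ (cs i) * r i) = v (cs i) * vb (r i) := by rw [Valuation.map_mul]; rfl
          _ ≤ v (cs i) * 1 := mul_le_mul_right (hr i) _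
          _ = v (cs i) := mul_one _
          _ < (v c)⁻¹ := hcon (cs i)
      rw [Valuation.map_inv] at hlt
      exact lt_irrefl _ hlt
    intro γ hγ
    refine (Subgroup.closure_induction
      (p := fun (g : Γˣ) _ => (∃ b : B, (g : Γ) ≤ v b) ∧ ∃ b : B, ((g⁻¹ : Γˣ) : Γ) ≤ v b)
      ?_ ?_ ?_ ?_ hγ).1
    · rintro x ⟨b, hb⟩
      refine ⟨⟨b, hb.ge⟩, ?_⟩
      have hvbne : v b ≠ 0 := by rw [hb]; exact x.ne_zero
      obtain ⟨b', hb'⟩ := key b hvbne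
      refine ⟨b', ?_⟩
      rw [hb] at hb'
      simpa [Units.val_inv_eq_inv_val] using hb'
    · exact ⟨⟨1, by simp [hvb]⟩, ⟨1, by simp [hvb]⟩⟩
    · rintro x y hx hy ⟨⟨b1, h1⟩, ⟨b1', h1'⟩⟩ ⟨⟨b2, h2⟩, ⟨b2', h2'⟩⟩
      refine ⟨⟨b1 * b2, ?_⟩, ⟨b1' * b2', ?_⟩⟩
      · rw [Valuation.map_mul]; exact mul_le_mul' h1 h2
      · rw [Valuation.map_mul]
        calc ((x * y)⁻¹ : Γˣ).val = (x⁻¹ : Γˣ).val * (y⁻¹ : Γˣ).val := by push_cast; exact mul_inv _ _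
          _ ≤ v b1' * v b2' := mul_le_mul' h1' h2'
    · rintro x _ ⟨h1, h2⟩
      exact ⟨h2, by simpa using h1⟩
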